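/- Let V be a complex vector space of complex dimension n, viewed as a real vector space with complex structure J (multiplication by i), and let Q be a real symmetric bilinear form on V. If Q(v,v) + Q(Jv,Jv) > 0 for every nonzero v ∈ V, then the index of Q is at most n. -/
import Mathlib


/-- If a real symmetric bilinear form `Q` on a complex vector space of complex
dimension `n` satisfies `Q(v,v) + Q(iv,iv) > 0` for all `v ≠ 0`, then its index
is at most `n`: every subspace on which `Q` is negative definite has real
dimension at most `n`. -/
theorem stmt1 (n : ℕ) (V : Type*) [AddCommGroup V] [Module ℂ V]
    [FiniteDimensional ℂ V] (hdim : Module.finrank ℂ V = n)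
    (Q : LinearMap.BilinForm ℝ V) (hQ : Q.IsSymm)
    (hpos : ∀ v : V, v ≠ 0 → 0 < Q v v + Q (Complex.I • v) (Complex.I • v))
    (W : Submodule ℝ V) (hW : ∀ w ∈ W, w ≠ 0 → Q w w < 0) :
    Module.finrank ℝ W ≤ n := by
  have : FiniteDimensional ℝ V := Module.Finite.trans ℂ V
  -- the ℝ-linear map "multiplication by I"
  let f : V ≃ₗ[ℝ] V :=
    { toFun := fun v => Complex.I • v
      invFun := fun v => (-Complex.I) • v
      map_add' := fun x y => smul_add _ x y
      map_smul' := fun r v => (smul_comm r Complex.I v).symm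
      left_inv := fun v => by simp [smul_smul]
      right_inv := fun v => by simp [smul_smul] }
  have hVdim : Module.finrank ℝ V = 2 * n := by
    rw [← Module.finrank_mul_finrank ℝ ℂ V, Complex.finrank_real_complex, hdim]
  -- intersection of W and I•W is trivial
  have hinter : W ⊓ W.map (f : V →ₗ[ℝ] V) = ⊥ := by
    rw [Submodule.eq_bot_iff]
    rintro x ⟨hxW, hxM⟩
    by_contra hx
    obtain ⟨u, huW, hu⟩ := hxM
    have hune : u ≠ 0 := by
      rintro rfl; apply hx; rw [← hu]; simp [f]
    have h1 : Q u u < 0 := hW u huW hune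
    have h2 : Q (Complex.I • u) (Complex.I • u) < 0 := by
      have : Complex.I • u = x := hu
      rw [this]; exact hW x hxW hx
    have := hpos u hune
    linarith
  have hmapdim : Module.finrank ℝ (W.map (f : V →ₗ[ℝ] V)) = Module.finrank ℝ W :=
    LinearEquiv.finrank_map_eq f W
  have hsum := Submodule.finrank_sup_add_finrank_inf_eq W (W.map (f : V →ₗ[ℝ] V))
  rw [hinter, finrank_bot, add_zero] at hsum
  have hle : Module.finrank ℝ ↥(W ⊔ W.map (f : V →ₗ[ℝ] V)) ≤ 2 * n := by
    rw [← hVdim]; exact Submodule.finrank_le _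
  omega
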